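/- Let X be an infinite set and S ⊆ X a subset with |X \ S| = |X| (S is co-large). Then for every function f : X → X there exists a function g : X → X such that g agrees with f on S and every fiber of g is large, i.e., |g⁻¹({y})| = |X| for all y ∈ X; in particular g is surjective and generous. -/
import Mathlib


open Cardinal

theorem stmt_5 {X : Type*} [Infinite X] (S : Set X) (hS : #(Sᶜ : Set X) = #X)
    (f : X → X) :
    ∃ g : X → X, (∀ x ∈ S, g x = f x) ∧ (∀ y : X, #(g ⁻¹' {y}) = #X) ∧
      Function.Surjective g := by
  have hprod : #(Sᶜ : Set X) = #(X × X) := by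
    rw [hS, Cardinal.mk_prod]
    simp only [Cardinal.lift_id]
    exact (Cardinal.mul_eq_self (Cardinal.aleph0_le_mk X)).symm
  obtain ⟨e⟩ := Cardinal.eq.mp hprod
  classical
  set g : X → X := fun x => if h : x ∈ S then f x else (e ⟨x, h⟩).1 with hg
  have hfib : ∀ y z : X, g (e.symm (y, z)).1 = y := by
    intro y z
    have hmem := (e.symm (y, z)).2
    simp only [hg]
    rw [dif_neg hmem]
    simp
  have key : ∀ y : X, #(g ⁻¹' {y}) = #X := by
    intro y
    refine le_antisymm (Cardinal.mk_set_le _) ?_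
    have : Function.Injective (fun z : X => (⟨(e.symm (y, z)).1, by simp [hfib]⟩ :
        (g ⁻¹' {y}))) := by
      intro a b hab
      have h1 := Subtype.ext_iff.mp hab
      have h2 : e.symm (y, a) = e.symm (y, b) := Subtype.ext h1
      have := congrArg (fun t => (e t).2) h2
      simpa using this
    exact Cardinal.mk_le_of_injective this
  refine ⟨g, ?_, key, ?_⟩
  · intro x hx
    simp [hg, dif_pos hx]
  · intro y
    exact ⟨(e.symm (y, y)).1, hfib y y⟩
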